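/- arXiv:2101.11779 — 4 statements merged into one kernel-verified Lean document; each statement's English description precedes it below -/
import Mathlib

section
/- Let q, α, z be complex numbers with |q| < 1, α ≠ 0, and such that no factor of the form 1 + z q^{2m+1} or 1 - (z/α) q^{2m+1} (m ≥ 0) vanishes. Then ν(α, z; q) = (1 / ((-zq; q²)_∞ · (zq/α; q²)_∞)) · Σ_{n=0}^∞ α^n q^{n²+n} − (zq/α) · ω₁(α, z; q). -/
open scoped BigOperators
open Finset Filter

/-- The finite q-Pochhammer symbol `(a; q)_n = ∏_{m=0}^{n-1} (1 - a q^m)`. -/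
noncomputable def qPoch (a q : ℂ) (n : ℕ) : ℂ := ∏ m ∈ Finset.range n, (1 - a * q ^ m)

/-- The infinite q-Pochhammer symbol `(a; q)_∞ = ∏_{m=0}^{∞} (1 - a q^m)`. -/
noncomputable def qPochInf (a q : ℂ) : ℂ := ∏' m : ℕ, (1 - a * q ^ m)

/-- `ω₁(α, z; q) := Σ_{n=0}^∞ q^{2n} / ((-zq; q²)_{n+1} (zq/α; q²)_{n+1})`. -/
noncomputable def omega1 (α z q : ℂ) : ℂ :=
  ∑' n : ℕ, q ^ (2 * n) / (qPoch (-z * q) (q ^ 2) (n + 1) * qPoch (z * q / α) (q ^ 2) (n + 1))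

/-- `ν(α, z; q) := Σ_{n=0}^∞ α^n q^{n²+n} / (-zq; q²)_{n+1}`. -/
noncomputable def nu (α z q : ℂ) : ℂ :=
  ∑' n : ℕ, α ^ n * q ^ (n ^ 2 + n) / qPoch (-z * q) (q ^ 2) (n + 1)




lemma tele (α b Q : ℂ) (t : ℕ → ℂ) (ht0 : t 0 = 1)
    (hts : ∀ n, t (n+1) = t n * α * Q^(n+1)) (M : ℕ) :
    ∑ n ∈ range (M+1), (t (M-n) * (1 - (-α*b)*Q^(M+1)) - t (M+1-n)) *
        (∏ m ∈ Ico (n+1) (M+1), (1 - b*Q^m))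
      + t (M+1) * ∏ m ∈ range (M+1), (1 - b*Q^m) = 1 := by
  have key := Finset.sum_range_sub
    (fun k => t (M+1-k) * ∏ m ∈ Ico k (M+1), (1 - b*Q^m)) (M+1)
  have hterm : ∀ n ∈ range (M+1),
      (t (M-n) * (1 - (-α*b)*Q^(M+1)) - t (M+1-n)) * (∏ m ∈ Ico (n+1) (M+1), (1 - b*Q^m))
        = t (M+1-(n+1)) * (∏ m ∈ Ico (n+1) (M+1), (1 - b*Q^m))
          - t (M+1-n) * ∏ m ∈ Ico n (M+1), (1 - b*Q^m) := by
    intro n hn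
    have hnM : n ≤ M := Nat.lt_succ_iff.mp (Finset.mem_range.mp hn)
    have h1 : M + 1 - (n+1) = M - n := by omega
    have h2 : M + 1 - n = (M - n) + 1 := by omega
    have h3 : t (M+1-n) = t (M-n) * α * Q^(M+1-n) := by
      rw [h2, hts (M-n), ← h2]
    have h4 : (∏ m ∈ Ico n (M+1), (1 - b*Q^m))
        = (1 - b*Q^n) * ∏ m ∈ Ico (n+1) (M+1), (1 - b*Q^m) :=
      Finset.prod_eq_prod_Ico_succ_bot (by omega) _
    have h5 : Q^(M+1-n) * Q^n = Q^(M+1) := by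
      rw [← pow_add]; congr 1; omega
    rw [h1, h4, h3, ← h5]; ring
  rw [Finset.sum_congr rfl hterm, key]
  have e1 : t (M+1-(M+1)) * ∏ m ∈ Ico (M+1) (M+1), (1 - b*Q^m) = 1 := by simp [ht0]
  have e2 : t (M+1-0) * ∏ m ∈ Ico 0 (M+1), (1 - b*Q^m)
      = t (M+1) * ∏ m ∈ range (M+1), (1 - b*Q^m) := by
    rw [Finset.range_eq_Ico, Nat.sub_zero]
  rw [e1, e2]; ring

lemma key (α b Q : ℂ) (t : ℕ → ℂ) (ht0 : t 0 = 1)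
    (hts : ∀ n, t (n+1) = t n * α * Q^(n+1)) (M : ℕ) :
    (∑ n ∈ range (M+1), t n * ∏ m ∈ Ico (n+1) (M+1), (1 - (-α*b)*Q^m))
        * (∏ m ∈ range (M+1), (1 - b*Q^m))
      + b * ∑ n ∈ range (M+1), Q^n * (∏ m ∈ Ico (n+1) (M+1), (1 - (-α*b)*Q^m))
          * (∏ m ∈ Ico (n+1) (M+1), (1 - b*Q^m))
      = ∑ n ∈ range (M+1), t (M-n) * ∏ m ∈ Ico (n+1) (M+1), (1 - b*Q^m) := by
  induction M with
  | zero => simp [ht0]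
  | succ M IH =>
    have htele := tele α b Q t ht0 hts M
    have tele' : (1 - (-α*b)*Q^(M+1)) * (∑ n ∈ range (M+1), t (M-n) * ∏ m ∈ Ico (n+1) (M+1), (1 - b*Q^m))
        - (∑ n ∈ range (M+1), t (M+1-n) * ∏ m ∈ Ico (n+1) (M+1), (1 - b*Q^m))
        + t (M+1) * ∏ m ∈ range (M+1), (1 - b*Q^m) = 1 := by
      rw [Finset.mul_sum, ← Finset.sum_sub_distrib]
      refine Eq.trans ?_ htele
      congr 1
      exact Finset.sum_congr rfl fun n _ => by ring
    have prodsplit : ∀ (x : ℂ), ∀ n ∈ range (M+1),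
        ∏ m ∈ Ico (n+1) (M+1+1), (1 - x*Q^m)
          = (∏ m ∈ Ico (n+1) (M+1), (1 - x*Q^m)) * (1 - x*Q^(M+1)) := fun x n hn =>
      Finset.prod_Ico_succ_top (Nat.succ_le_succ (Nat.lt_succ_iff.mp (Finset.mem_range.mp hn))) _
    have ea : ∀ n ∈ range (M+1), t n * ∏ m ∈ Ico (n+1) (M+1+1), (1 - (-α*b)*Q^m)
        = (t n * ∏ m ∈ Ico (n+1) (M+1), (1 - (-α*b)*Q^m)) * (1 - (-α*b)*Q^(M+1)) := by
      intro n hn; rw [prodsplit _ n hn]; ring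
    have eb : ∀ n ∈ range (M+1), Q^n * (∏ m ∈ Ico (n+1) (M+1+1), (1 - (-α*b)*Q^m))
          * (∏ m ∈ Ico (n+1) (M+1+1), (1 - b*Q^m))
        = (Q^n * (∏ m ∈ Ico (n+1) (M+1), (1 - (-α*b)*Q^m)) * (∏ m ∈ Ico (n+1) (M+1), (1 - b*Q^m)))
            * ((1 - (-α*b)*Q^(M+1)) * (1 - b*Q^(M+1))) := by
      intro n hn; rw [prodsplit _ n hn, prodsplit _ n hn]; ring
    have ec : ∀ n ∈ range (M+1), t (M+1-n) * ∏ m ∈ Ico (n+1) (M+1+1), (1 - b*Q^m)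
        = (t (M+1-n) * ∏ m ∈ Ico (n+1) (M+1), (1 - b*Q^m)) * (1 - b*Q^(M+1)) := by
      intro n hn; rw [prodsplit _ n hn]; ring
    rw [Finset.sum_range_succ _ (M+1), Finset.sum_range_succ _ (M+1), Finset.sum_range_succ _ (M+1),
      Finset.sum_congr rfl ea, Finset.sum_congr rfl ec, Finset.sum_congr rfl eb,
      ← Finset.sum_mul, ← Finset.sum_mul, ← Finset.sum_mul, Finset.prod_range_succ]
    simp only [Nat.sub_self, ht0, Finset.Ico_self, Finset.prod_empty]
    linear_combination ((1 - (-α*b)*Q^(M+1)) * (1 - b*Q^(M+1))) * IH + (1 - b*Q^(M+1)) * tele'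



lemma norm_prod_one_add_le (s : Finset ℕ) (f : ℕ → ℂ) :
    ‖∏ i ∈ s, (1 + f i)‖ ≤ ∏ i ∈ s, (1 + ‖f i‖) :=
  le_trans (norm_prod_le _ _) (Finset.prod_le_prod (fun _ _ => norm_nonneg _)
    (fun i _ => le_trans (norm_add_le _ _) (by simp)))

lemma norm_prod_one_add_sub_one_le (s : Finset ℕ) (f : ℕ → ℂ) :
    ‖(∏ i ∈ s, (1 + f i)) - 1‖ ≤ (∏ i ∈ s, (1 + ‖f i‖)) - 1 := by
  classical
  induction s using Finset.cons_induction with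
  | empty => simp
  | cons i s hi ih =>
    rw [Finset.prod_cons, Finset.prod_cons]
    have key : (1 + f i) * (∏ j ∈ s, (1 + f j)) - 1
        = ((∏ j ∈ s, (1 + f j)) - 1) + f i * ∏ j ∈ s, (1 + f j) := by ring
    calc ‖(1 + f i) * (∏ j ∈ s, (1 + f j)) - 1‖
        ≤ ‖(∏ j ∈ s, (1 + f j)) - 1‖ + ‖f i‖ * ‖∏ j ∈ s, (1 + f j)‖ := by
          rw [key]; exact le_trans (norm_add_le _ _) (by rw [norm_mul])
      _ ≤ ((∏ j ∈ s, (1 + ‖f j‖)) - 1) + ‖f i‖ * ∏ j ∈ s, (1 + ‖f j‖) :=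
          add_le_add ih (mul_le_mul_of_nonneg_left (norm_prod_one_add_le s f) (norm_nonneg _))
      _ = (1 + ‖f i‖) * (∏ j ∈ s, (1 + ‖f j‖)) - 1 := by ring

lemma prod_one_add_sub_one_le (s : Finset ℕ) (y : ℕ → ℝ) (hy : ∀ i, 0 ≤ y i) :
    (∏ i ∈ s, (1 + y i)) - 1 ≤ (∑ i ∈ s, y i) * ∏ i ∈ s, (1 + y i) := by
  classical
  induction s using Finset.cons_induction with
  | empty => simp
  | cons i s hi ih =>
    rw [Finset.prod_cons, Finset.sum_cons]
    have hP : (0:ℝ) ≤ ∏ j ∈ s, (1 + y j) :=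
      Finset.prod_nonneg fun j _ => by linarith [hy j]
    have hS : (0:ℝ) ≤ ∑ j ∈ s, y j := Finset.sum_nonneg fun j _ => hy j
    nlinarith [hy i, ih, mul_nonneg (hy i) hP, mul_nonneg hS hP, mul_nonneg (mul_nonneg (hy i) hS) hP]

lemma prod_one_add_le_exp (s : Finset ℕ) (y : ℕ → ℝ) (hy : ∀ i, 0 ≤ y i) :
    (∏ i ∈ s, (1 + y i)) ≤ Real.exp (∑ i ∈ s, y i) := by
  rw [Real.exp_sum]
  exact Finset.prod_le_prod (fun i _ => by linarith [hy i])
    (fun i _ => by simpa [add_comm] using Real.add_one_le_exp (y i))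

lemma exists_pos_le_norm (A : ℕ → ℂ) (P : ℂ) (hA : ∀ n, A n ≠ 0) (hP : P ≠ 0)
    (hlim : Filter.Tendsto A atTop (nhds P)) : ∃ δ : ℝ, 0 < δ ∧ ∀ n, δ ≤ ‖A n‖ := by
  classical
  have h2 : Filter.Tendsto (fun n => ‖A n‖) atTop (nhds ‖P‖) := hlim.norm
  obtain ⟨N, hN⟩ := Filter.eventually_atTop.mp
    (h2.eventually_const_lt (half_lt_self (norm_pos_iff.mpr hP)))
  set s : Finset ℝ := insert (‖P‖/2) ((Finset.range N).image fun n => ‖A n‖) with hs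
  have hsne : s.Nonempty := ⟨_, Finset.mem_insert_self _ _⟩
  refine ⟨s.min' hsne, ?_, ?_⟩
  · have hmem : s.min' hsne ∈ insert (‖P‖/2) ((Finset.range N).image fun n => ‖A n‖) :=
      hs ▸ s.min'_mem hsne
    rcases Finset.mem_insert.mp hmem with h | h
    · rw [h]; exact half_pos (norm_pos_iff.mpr hP)
    · obtain ⟨n, _, hn⟩ := Finset.mem_image.mp h
      rw [← hn]; exact norm_pos_iff.mpr (hA n)
  · intro n
    by_cases hn : n < N
    · exact s.min'_le _ (Finset.mem_insert_of_mem
        (Finset.mem_image_of_mem _ (Finset.mem_range.mpr hn)))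
    · exact le_trans (s.min'_le _ (Finset.mem_insert_self _ _)) (hN n (le_of_not_gt hn)).le

lemma mult_pack (x Q : ℂ) (hQ : ‖Q‖ < 1) (hfac : ∀ m : ℕ, (1 - x*Q^m) ≠ 0) :
    Multipliable (fun m : ℕ => 1 - x*Q^m) ∧ (∏' m : ℕ, (1 - x*Q^m)) ≠ 0 := by
  have hlog : Summable fun m : ℕ => Complex.log (1 - x*Q^m) := by
    have htend : Filter.Tendsto (fun m : ℕ => ‖x‖ * ‖Q‖^m) atTop (nhds 0) := by
      simpa using (tendsto_pow_atTop_nhds_zero_of_lt_one (norm_nonneg Q) hQ).const_mul ‖x‖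
    have hev : ∀ᶠ m in atTop, ‖x‖ * ‖Q‖^m ≤ 1/2 :=
      htend.eventually_le_const (by norm_num)
    refine Summable.of_norm_bounded_eventually_nat (g := fun m => 3/2 * (‖x‖ * ‖Q‖^m))
      (((summable_geometric_of_lt_one (norm_nonneg Q) hQ).mul_left ‖x‖).mul_left (3/2)) ?_
    filter_upwards [hev] with m hm
    have h0 : ‖-(x*Q^m)‖ ≤ 1/2 := by simpa [norm_mul, norm_pow] using hm
    have hlb := Complex.norm_log_one_add_half_le_self h0
    have he : (1 : ℂ) + -(x*Q^m) = 1 - x*Q^m := by ring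
    rw [he] at hlb
    simpa [norm_mul, norm_pow] using hlb
  refine ⟨Complex.multipliable_of_summable_log hlog, ?_⟩
  have h := Complex.cexp_tsum_eq_tprod hfac hlog
  rw [← h]
  exact Complex.exp_ne_zero _

theorem nu_eq_partialTheta_sub_omega1 (q α z : ℂ) (hq : ‖q‖ < 1) (hα : α ≠ 0)
    (h1 : ∀ m : ℕ, 1 + z * q ^ (2 * m + 1) ≠ 0)
    (h2 : ∀ m : ℕ, 1 - z / α * q ^ (2 * m + 1) ≠ 0) :
    nu α z q =
      (1 / (qPochInf (-z * q) (q ^ 2) * qPochInf (z * q / α) (q ^ 2))) *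
          (∑' n : ℕ, α ^ n * q ^ (n ^ 2 + n)) -
        (z * q / α) * omega1 α z q := by
  classical
  have hq' : ‖q‖ < 1 := hq
  set Q : ℂ := q^2 with hQdef
  set a : ℂ := -z*q with hadef
  set b : ℂ := z*q/α with hbdef
  set t : ℕ → ℂ := fun n => α^n * q^(n^2+n) with htdef
  have hQ1 : ‖Q‖ < 1 := by
    rw [hQdef, norm_pow]
    exact pow_lt_one₀ (norm_nonneg q) hq' two_ne_zero
  have ht0 : t 0 = 1 := by simp [htdef]
  have hts : ∀ n, t (n+1) = t n * α * Q^(n+1) := by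
    intro n
    have he : (n+1)^2 + (n+1) = (n^2+n) + 2*(n+1) := by ring
    simp only [htdef, hQdef]
    rw [he, pow_add q (n^2+n) (2*(n+1)), pow_mul q 2 (n+1)]
    ring
  have hpow : ∀ m : ℕ, q^(2*m+1) = Q^m * q := by
    intro m
    rw [hQdef, pow_add, pow_mul, pow_one]
  have hAfac : ∀ m : ℕ, (1 - a*Q^m) ≠ 0 := by
    intro m
    have he : 1 - a*Q^m = 1 + z * q^(2*m+1) := by rw [hpow, hadef]; ring
    rw [he]; exact h1 m
  have hBfac : ∀ m : ℕ, (1 - b*Q^m) ≠ 0 := by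
    intro m
    have he : 1 - b*Q^m = 1 - z/α * q^(2*m+1) := by rw [hpow, hbdef]; ring
    rw [he]; exact h2 m
  have hApoch_ne : ∀ n, qPoch a Q n ≠ 0 :=
    fun n => Finset.prod_ne_zero_iff.mpr fun m _ => hAfac m
  have hBpoch_ne : ∀ n, qPoch b Q n ≠ 0 :=
    fun n => Finset.prod_ne_zero_iff.mpr fun m _ => hBfac m
  obtain ⟨hmA, hPA⟩ := mult_pack a Q hQ1 hAfac
  obtain ⟨hmB, hPB⟩ := mult_pack b Q hQ1 hBfac
  have hPAeq : qPochInf a Q = ∏' m : ℕ, (1 - a*Q^m) := rfl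
  have hPBeq : qPochInf b Q = ∏' m : ℕ, (1 - b*Q^m) := rfl
  have hAlim : Tendsto (fun M => qPoch a Q (M+1)) atTop (nhds (qPochInf a Q)) := by
    have h := hmA.hasProd.tendsto_prod_nat
    exact (h.comp (tendsto_add_atTop_nat 1)).congr fun M => rfl
  have hBlim : Tendsto (fun M => qPoch b Q (M+1)) atTop (nhds (qPochInf b Q)) := by
    have h := hmB.hasProd.tendsto_prod_nat
    exact (h.comp (tendsto_add_atTop_nat 1)).congr fun M => rfl
  have hABlim : Tendsto (fun M => qPoch a Q (M+1) * qPoch b Q (M+1)) atTop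
      (nhds (qPochInf a Q * qPochInf b Q)) := hAlim.mul hBlim
  obtain ⟨δa, hδa, hδaA⟩ :=
    exists_pos_le_norm (fun M => qPoch a Q (M+1)) _ (fun n => hApoch_ne _) hPA hAlim
  obtain ⟨δb, hδb, hδbB⟩ :=
    exists_pos_le_norm (fun M => qPoch b Q (M+1)) _ (fun n => hBpoch_ne _) hPB hBlim
  -- summability of t
  have hsumt : Summable t := by
    apply summable_of_ratio_norm_eventually_le (r := 1/2) (by norm_num)
    have htend : Tendsto (fun n : ℕ => ‖α‖ * ‖Q‖^(n+1)) atTop (nhds 0) := by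
      have h0 : Tendsto (fun n : ℕ => ‖α‖ * ‖Q‖^n) atTop (nhds 0) := by
        simpa using (tendsto_pow_atTop_nhds_zero_of_lt_one (norm_nonneg Q) hQ1).const_mul ‖α‖
      exact h0.comp (tendsto_add_atTop_nat 1)
    filter_upwards [htend.eventually_le_const (by norm_num : (0:ℝ) < 1/2)] with n hn
    rw [hts n, mul_assoc, norm_mul, mul_comm (1/2 : ℝ)]
    refine mul_le_mul_of_nonneg_left ?_ (norm_nonneg _)
    rw [norm_mul, norm_pow]
    exact hn
  have hsumtn : Summable (fun n => ‖t n‖) := hsumt.norm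
  -- summability of nu terms
  have hsnu : Summable (fun n => t n / qPoch a Q (n+1)) := by
    refine Summable.of_norm_bounded (g := fun n => ‖t n‖ * δa⁻¹) (hsumtn.mul_right δa⁻¹) ?_
    intro n
    rw [norm_div, div_eq_mul_inv]
    refine mul_le_mul_of_nonneg_left ?_ (norm_nonneg _)
    exact inv_anti₀ hδa (hδaA n)
  -- summability of omega terms
  have hsom : Summable (fun n => q^(2*n) / (qPoch a Q (n+1) * qPoch b Q (n+1))) := by
    refine Summable.of_norm_bounded (g := fun n => (‖q‖^2)^n * (δa*δb)⁻¹)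
      (((summable_geometric_of_lt_one (by positivity)
        (by rw [← norm_pow, ← hQdef]; exact hQ1)).mul_right (δa*δb)⁻¹)) ?_
    intro n
    rw [norm_div, div_eq_mul_inv]
    have h1' : ‖q^(2*n)‖ = (‖q‖^2)^n := by rw [norm_pow, pow_mul]
    rw [h1']
    refine mul_le_mul_of_nonneg_left ?_ (by positivity)
    refine inv_anti₀ (by positivity) ?_
    rw [norm_mul]
    exact mul_le_mul (hδaA n) (hδbB n) hδb.le (norm_nonneg _)
  -- the division identity per M
  have hdiv : ∀ M : ℕ,
      (∑ n ∈ range (M+1), t n / qPoch a Q (n+1))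
        + b * ∑ n ∈ range (M+1), q^(2*n) / (qPoch a Q (n+1) * qPoch b Q (n+1))
      = (∑ n ∈ range (M+1), t (M-n) * ∏ m ∈ Ico (n+1) (M+1), (1 - b*Q^m))
          / (qPoch a Q (M+1) * qPoch b Q (M+1)) := by
    intro M
    rw [eq_div_iff (mul_ne_zero (hApoch_ne (M+1)) (hBpoch_ne (M+1)))]
    have hterm1 : ∀ n ∈ range (M+1),
        (t n / qPoch a Q (n+1)) * (qPoch a Q (M+1) * qPoch b Q (M+1))
          = (t n * ∏ m ∈ Ico (n+1) (M+1), (1 - a*Q^m)) * qPoch b Q (M+1) := by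
      intro n hn
      have hle : n+1 ≤ M+1 := Nat.succ_le_succ (Nat.lt_succ_iff.mp (Finset.mem_range.mp hn))
      have hsplit : qPoch a Q (M+1)
          = qPoch a Q (n+1) * ∏ m ∈ Ico (n+1) (M+1), (1 - a*Q^m) :=
        (Finset.prod_range_mul_prod_Ico _ hle).symm
      calc (t n / qPoch a Q (n+1)) * (qPoch a Q (M+1) * qPoch b Q (M+1))
          = ((t n / qPoch a Q (n+1)) * qPoch a Q (n+1))
              * ((∏ m ∈ Ico (n+1) (M+1), (1 - a*Q^m)) * qPoch b Q (M+1)) := by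
            rw [hsplit]; ring
        _ = (t n * ∏ m ∈ Ico (n+1) (M+1), (1 - a*Q^m)) * qPoch b Q (M+1) := by
            rw [div_mul_cancel₀ _ (hApoch_ne (n+1))]; ring
    have hterm2 : ∀ n ∈ range (M+1),
        (q^(2*n) / (qPoch a Q (n+1) * qPoch b Q (n+1)))
            * (qPoch a Q (M+1) * qPoch b Q (M+1))
          = Q^n * (∏ m ∈ Ico (n+1) (M+1), (1 - a*Q^m))
              * (∏ m ∈ Ico (n+1) (M+1), (1 - b*Q^m)) := by
      intro n hn
      have hle : n+1 ≤ M+1 := Nat.succ_le_succ (Nat.lt_succ_iff.mp (Finset.mem_range.mp hn))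
      have hsplitA : qPoch a Q (M+1)
          = qPoch a Q (n+1) * ∏ m ∈ Ico (n+1) (M+1), (1 - a*Q^m) :=
        (Finset.prod_range_mul_prod_Ico _ hle).symm
      have hsplitB : qPoch b Q (M+1)
          = qPoch b Q (n+1) * ∏ m ∈ Ico (n+1) (M+1), (1 - b*Q^m) :=
        (Finset.prod_range_mul_prod_Ico _ hle).symm
      have hq2 : q^(2*n) = Q^n := by rw [hQdef, pow_mul]
      calc (q^(2*n) / (qPoch a Q (n+1) * qPoch b Q (n+1)))
            * (qPoch a Q (M+1) * qPoch b Q (M+1))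
          = ((q^(2*n) / (qPoch a Q (n+1) * qPoch b Q (n+1)))
              * (qPoch a Q (n+1) * qPoch b Q (n+1)))
            * ((∏ m ∈ Ico (n+1) (M+1), (1 - a*Q^m))
                * ∏ m ∈ Ico (n+1) (M+1), (1 - b*Q^m)) := by
            rw [hsplitA, hsplitB]; ring
        _ = Q^n * (∏ m ∈ Ico (n+1) (M+1), (1 - a*Q^m))
              * (∏ m ∈ Ico (n+1) (M+1), (1 - b*Q^m)) := by
            rw [div_mul_cancel₀ _ (mul_ne_zero (hApoch_ne (n+1)) (hBpoch_ne (n+1))), hq2]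
            ring
    rw [add_mul, Finset.sum_mul, mul_assoc, Finset.sum_mul,
      Finset.sum_congr rfl hterm1, Finset.sum_congr rfl hterm2, ← Finset.sum_mul]
    have hba : -α*b = a := by
      rw [hbdef, hadef]
      field_simp
    have hk := key α b Q t ht0 hts M
    simp only [hba] at hk
    exact hk
  -- decomposition of RHS sum
  set err : ℕ → ℂ := fun M => ∑ n ∈ range (M+1),
      t (M-n) * ((∏ m ∈ Ico (n+1) (M+1), (1 - b*Q^m)) - 1) with herrdef
  have hdecomp : ∀ M : ℕ,
      ∑ n ∈ range (M+1), t (M-n) * ∏ m ∈ Ico (n+1) (M+1), (1 - b*Q^m)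
        = (∑ n ∈ range (M+1), t n) + err M := by
    intro M
    rw [herrdef]
    simp only
    have hrefl : ∑ n ∈ range (M+1), t n = ∑ n ∈ range (M+1), t (M-n) := by
      have h := Finset.sum_range_reflect t (M+1)
      simp only [Nat.add_sub_cancel] at h
      exact h.symm
    rw [hrefl, ← Finset.sum_add_distrib]
    exact Finset.sum_congr rfl fun n _ => by ring
  -- err tends to zero
  have herr0 : Tendsto err atTop (nhds 0) := by
    set C : ℝ := ∑' m : ℕ, (‖b‖ * ‖Q‖^m) with hCdef
    have hgeos : Summable (fun m : ℕ => ‖b‖ * ‖Q‖^m) :=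
      (summable_geometric_of_lt_one (norm_nonneg Q) hQ1).mul_left ‖b‖
    set K : ℝ := ‖b‖ * (1-‖Q‖)⁻¹ * Real.exp C with hKdef
    have hK0 : 0 ≤ K := by
      rw [hKdef]
      have : (0:ℝ) ≤ (1-‖Q‖)⁻¹ := by
        rw [inv_nonneg]; linarith
      positivity
    set G : ℕ → ℝ := fun n => K * ‖Q‖^(n+1) with hGdef
    have hGsum : Summable G := by
      rw [hGdef]
      have h0 : Summable (fun n : ℕ => ‖Q‖^(n+1)) :=
        ((summable_geometric_of_lt_one (norm_nonneg Q) hQ1).comp_injective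
          (add_left_injective 1))
      exact h0.mul_left K
    have hbound : ∀ M : ℕ, ∀ n ∈ range (M+1),
        ‖(∏ m ∈ Ico (n+1) (M+1), (1 - b*Q^m)) - 1‖ ≤ G n := by
      intro M n _
      have e1 : ∀ m : ℕ, (1 : ℂ) - b*Q^m = 1 + (-(b*Q^m)) := fun m => by ring
      have h1' : ‖(∏ m ∈ Ico (n+1) (M+1), (1 - b*Q^m)) - 1‖
          ≤ (∏ m ∈ Ico (n+1) (M+1), (1 + ‖b‖*‖Q‖^m)) - 1 := by
        have := _root_.norm_prod_one_add_sub_one_le (Finset.Ico (n+1) (M+1)) (fun m => -(b*Q^m))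
        simp only [norm_neg, norm_mul, norm_pow] at this
        calc ‖(∏ m ∈ Ico (n+1) (M+1), (1 - b*Q^m)) - 1‖
            = ‖(∏ m ∈ Ico (n+1) (M+1), (1 + (-(b*Q^m)))) - 1‖ := by
              rw [Finset.prod_congr rfl fun m _ => e1 m]
          _ ≤ _ := this
      have hynn : ∀ m : ℕ, (0:ℝ) ≤ ‖b‖*‖Q‖^m := fun m => by positivity
      have h2' : (∏ m ∈ Ico (n+1) (M+1), (1 + ‖b‖*‖Q‖^m)) - 1
          ≤ (∑ m ∈ Ico (n+1) (M+1), ‖b‖*‖Q‖^m)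
              * ∏ m ∈ Ico (n+1) (M+1), (1 + ‖b‖*‖Q‖^m) :=
        prod_one_add_sub_one_le _ _ hynn
      have h3' : (∏ m ∈ Ico (n+1) (M+1), (1 + ‖b‖*‖Q‖^m)) ≤ Real.exp C := by
        refine le_trans (prod_one_add_le_exp _ _ hynn) ?_
        refine Real.exp_le_exp.mpr ?_
        exact Summable.sum_le_tsum _ (fun m _ => hynn m) hgeos
      have h4' : (∑ m ∈ Ico (n+1) (M+1), ‖b‖*‖Q‖^m) ≤ ‖b‖ * ‖Q‖^(n+1) * (1-‖Q‖)⁻¹ := by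
        rw [Finset.sum_Ico_eq_sum_range]
        have he : ∀ i, ‖b‖*‖Q‖^(n+1+i) = (‖b‖*‖Q‖^(n+1)) * ‖Q‖^i := by
          intro i; rw [pow_add]; ring
        calc ∑ i ∈ range (M+1-(n+1)), ‖b‖*‖Q‖^(n+1+i)
            = (‖b‖*‖Q‖^(n+1)) * ∑ i ∈ range (M+1-(n+1)), ‖Q‖^i := by
              rw [Finset.mul_sum]
              exact Finset.sum_congr rfl fun i _ => he i
          _ ≤ (‖b‖*‖Q‖^(n+1)) * (1-‖Q‖)⁻¹ := by
              refine mul_le_mul_of_nonneg_left ?_ (by positivity)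
              refine le_trans (Summable.sum_le_tsum _ (fun i _ => by positivity)
                (summable_geometric_of_lt_one (norm_nonneg Q) hQ1)) ?_
              rw [tsum_geometric_of_lt_one (norm_nonneg Q) hQ1]
          _ = ‖b‖ * ‖Q‖^(n+1) * (1-‖Q‖)⁻¹ := rfl
      have hsumnn : (0:ℝ) ≤ ∑ m ∈ Ico (n+1) (M+1), ‖b‖*‖Q‖^m :=
        Finset.sum_nonneg fun m _ => hynn m
      calc ‖(∏ m ∈ Ico (n+1) (M+1), (1 - b*Q^m)) - 1‖
          ≤ (∑ m ∈ Ico (n+1) (M+1), ‖b‖*‖Q‖^m)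
              * ∏ m ∈ Ico (n+1) (M+1), (1 + ‖b‖*‖Q‖^m) := le_trans h1' h2'
        _ ≤ (‖b‖ * ‖Q‖^(n+1) * (1-‖Q‖)⁻¹) * Real.exp C := by
            have h1Q : (0:ℝ) ≤ (1-‖Q‖)⁻¹ := by
              rw [inv_nonneg]; linarith
            exact mul_le_mul h4' h3' (Finset.prod_nonneg fun m _ => by positivity)
              (mul_nonneg (by positivity) h1Q)
        _ = G n := by rw [hGdef, hKdef]; ring
    -- Cauchy product bound
    have hf : Summable (fun n : ℕ => ‖(‖t n‖)‖) := summable_norm_iff.mpr hsumtn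
    have hg : Summable (fun n : ℕ => ‖G n‖) := summable_norm_iff.mpr hGsum
    have hcauchy : Summable (fun M => ∑ n ∈ range (M+1), ‖t n‖ * G (M-n)) :=
      (summable_norm_sum_mul_range_of_summable_norm hf hg).of_norm
    have herrbnd : ∀ M, ‖err M‖ ≤ ∑ n ∈ range (M+1), ‖t n‖ * G (M-n) := by
      intro M
      rw [herrdef]
      simp only
      calc ‖∑ n ∈ range (M+1), t (M-n) * ((∏ m ∈ Ico (n+1) (M+1), (1 - b*Q^m)) - 1)‖
          ≤ ∑ n ∈ range (M+1), ‖t (M-n)‖ * G n := by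
            refine le_trans (norm_sum_le _ _) (Finset.sum_le_sum ?_)
            intro n hn
            rw [norm_mul]
            exact mul_le_mul_of_nonneg_left (hbound M n hn) (norm_nonneg _)
        _ = ∑ n ∈ range (M+1), ‖t n‖ * G (M-n) := by
            refine Eq.symm ?_
            rw [← Finset.sum_range_reflect (fun n => ‖t n‖ * G (M-n)) (M+1)]
            refine Finset.sum_congr rfl fun j hj => ?_
            have hjM : j ≤ M := Nat.lt_succ_iff.mp (Finset.mem_range.mp hj)
            have e1 : M + 1 - 1 - j = M - j := by omega
            have e2 : M - (M - j) = j := by omega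
            simp only [e1, e2]
    exact squeeze_zero_norm herrbnd hcauchy.tendsto_atTop_zero
  -- final limit assembly
  have hνlim : Tendsto (fun M => ∑ n ∈ range (M+1), t n / qPoch a Q (n+1)) atTop
      (nhds (nu α z q)) := by
    have hnueq : nu α z q = ∑' n, t n / qPoch a Q (n+1) := rfl
    rw [hnueq]
    exact (hsnu.hasSum.tendsto_sum_nat.comp (tendsto_add_atTop_nat 1)).congr fun M => rfl
  have hωlim : Tendsto (fun M => ∑ n ∈ range (M+1),
        q^(2*n) / (qPoch a Q (n+1) * qPoch b Q (n+1))) atTop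
      (nhds (omega1 α z q)) := by
    have homeq : omega1 α z q
        = ∑' n, q^(2*n) / (qPoch a Q (n+1) * qPoch b Q (n+1)) := rfl
    rw [homeq]
    exact (hsom.hasSum.tendsto_sum_nat.comp (tendsto_add_atTop_nat 1)).congr fun M => rfl
  have hθlim : Tendsto (fun M => ∑ n ∈ range (M+1), t n) atTop (nhds (∑' n, t n)) :=
    (hsumt.hasSum.tendsto_sum_nat.comp (tendsto_add_atTop_nat 1)).congr fun M => rfl
  have hL : Tendsto (fun M => (∑ n ∈ range (M+1), t n / qPoch a Q (n+1))
      + b * ∑ n ∈ range (M+1), q^(2*n) / (qPoch a Q (n+1) * qPoch b Q (n+1))) atTop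
      (nhds (nu α z q + b * omega1 α z q)) := hνlim.add (hωlim.const_mul b)
  have hR : Tendsto (fun M => ((∑ n ∈ range (M+1), t n) + err M)
        / (qPoch a Q (M+1) * qPoch b Q (M+1))) atTop
      (nhds (((∑' n, t n) + 0) / (qPochInf a Q * qPochInf b Q))) :=
    (hθlim.add herr0).div hABlim (mul_ne_zero hPA hPB)
  have hEq : (fun M => (∑ n ∈ range (M+1), t n / qPoch a Q (n+1))
      + b * ∑ n ∈ range (M+1), q^(2*n) / (qPoch a Q (n+1) * qPoch b Q (n+1)))
      = fun M => ((∑ n ∈ range (M+1), t n) + err M)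
        / (qPoch a Q (M+1) * qPoch b Q (M+1)) :=
    funext fun M => by rw [hdiv M, hdecomp M]
  have E := tendsto_nhds_unique (hEq ▸ hL) hR
  have hθeq : (∑' n : ℕ, α ^ n * q ^ (n ^ 2 + n)) = ∑' n, t n := rfl
  rw [hθeq]
  rw [add_zero] at E
  linear_combination E
end

section
/- Let q, α be complex numbers with |q| < 1 such that no factor 1 + α q^{m+1} (m ≥ 0) vanishes. Then Σ_{n=0}^∞ α^n q^{n(n+1)/2} / (−αq; q)_{n+1} = 1. -/
open scoped BigOperators

theorem kang_corollary_74 (q α : ℂ) (hq : ‖q‖ < 1)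
    (h : ∀ m : ℕ, 1 + α * q ^ (m + 1) ≠ 0) :
    (∑' n : ℕ, α ^ n * q ^ (n * (n + 1) / 2) / qPoch (-α * q) q (n + 1)) = 1 := by
  have hfac : ∀ m : ℕ, (1 : ℂ) - (-α * q) * q ^ m = 1 + α * q ^ (m + 1) := by
    intro m; ring
  have hP : ∀ n : ℕ, qPoch (-α * q) q n ≠ 0 := by
    intro n
    rw [qPoch]
    exact Finset.prod_ne_zero_iff.mpr fun m _ => by rw [hfac m]; exact h m
  have hPsucc : ∀ n : ℕ, qPoch (-α * q) q (n + 1)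
      = qPoch (-α * q) q n * (1 + α * q ^ (n + 1)) := by
    intro n
    rw [qPoch, qPoch, Finset.prod_range_succ, hfac n]
  set a : ℕ → ℂ := fun n => α ^ n * q ^ (n * (n + 1) / 2) / qPoch (-α * q) q (n + 1) with ha
  set b : ℕ → ℂ := fun n => α ^ n * q ^ (n * (n + 1) / 2) / qPoch (-α * q) q n with hb
  have hexp : ∀ n : ℕ, (n + 1) * (n + 2) / 2 = n * (n + 1) / 2 + (n + 1) := by
    intro n
    have h1 : (n + 1) * (n + 2) = n * (n + 1) + (n + 1) * 2 := by ring
    rw [h1, Nat.add_mul_div_right _ _ (by norm_num : (0:ℕ) < 2)]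
  have hc : ∀ n : ℕ, α ^ (n + 1) * q ^ ((n + 1) * (n + 2) / 2)
      = α ^ n * q ^ (n * (n + 1) / 2) * (α * q ^ (n + 1)) := by
    intro n
    rw [hexp n, pow_add, pow_succ]
    ring
  have hba : ∀ n : ℕ, b n = a n * (1 + α * q ^ (n + 1)) := by
    intro n
    simp only [ha, hb, hPsucc n]
    rw [div_mul_eq_mul_div, mul_div_mul_right _ _ (h n)]
  have hbs : ∀ n : ℕ, b (n + 1) = a n * (α * q ^ (n + 1)) := by
    intro n
    simp only [ha, hb]
    have h2 : (n + 1) * ((n + 1) + 1) / 2 = (n + 1) * (n + 2) / 2 := by ring_nf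
    rw [h2, hc n, mul_div_right_comm]
  have hkey : ∀ n : ℕ, a n = b n - b (n + 1) := by
    intro n
    rw [hba n, hbs n]
    ring
  -- ratio relation : a (n+1) = a n * (α q^(n+1) / (1 + α q^(n+2)))
  have hrat : ∀ n : ℕ, a (n + 1) = a n * (α * q ^ (n + 1) / (1 + α * q ^ (n + 2))) := by
    intro n
    simp only [ha]
    have h2 : (n + 1) * ((n + 1) + 1) / 2 = (n + 1) * (n + 2) / 2 := by ring_nf
    rw [h2, hc n, hPsucc (n + 1)]
    have : n + 1 + 1 = n + 2 := rfl
    rw [this]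
    field_simp
  -- tendsto of α * q^(n+1) to 0
  have hq' : ‖q‖ < 1 := hq
  have htend : Filter.Tendsto (fun n : ℕ => α * q ^ (n + 1)) Filter.atTop (nhds 0) := by
    have := (tendsto_pow_atTop_nhds_zero_of_norm_lt_one hq').comp
      (Filter.tendsto_add_atTop_nat 1)
    simpa using (this.const_mul α)
  have hsmall : ∀ᶠ n : ℕ in Filter.atTop, ‖α * q ^ (n + 1)‖ < 1 / 4 :=
    htend.norm.eventually_lt_const (by norm_num)
  obtain ⟨N, hN⟩ := Filter.eventually_atTop.mp hsmall
  -- summability via ratio test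
  have hsum : Summable a := by
    apply summable_of_ratio_norm_eventually_le (r := 1 / 2) (by norm_num)
    filter_upwards [Filter.eventually_atTop.mpr ⟨N, fun n hn => hN n hn⟩,
      Filter.eventually_atTop.mpr ⟨N, fun n (hn : N ≤ n) => hN (n + 1) (le_trans hn (Nat.le_succ n))⟩]
      with n h1 h2
    rw [hrat n, norm_mul, mul_comm]
    have hden : (1 : ℝ) / 2 ≤ ‖1 + α * q ^ (n + 2)‖ := by
      have h3 : ‖(1 : ℂ)‖ ≤ ‖1 + α * q ^ (n + 2)‖ + ‖α * q ^ (n + 2)‖ := by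
        calc ‖(1 : ℂ)‖ = ‖(1 + α * q ^ (n + 2)) - α * q ^ (n + 2)‖ := by ring_nf
          _ ≤ _ := norm_sub_le _ _
      rw [norm_one] at h3
      have h2' : ‖α * q ^ (n + 1 + 1)‖ < 1 / 4 := h2
      have h2'' : ‖α * q ^ (n + 2)‖ < 1 / 4 := h2'
      linarith
    have hden0 : ‖1 + α * q ^ (n + 2)‖ ≠ 0 := by positivity
    have : ‖α * q ^ (n + 1) / (1 + α * q ^ (n + 2))‖ ≤ 1 / 2 := by
      rw [norm_div, div_le_iff₀ (by linarith)]
      nlinarith [norm_nonneg (α * q ^ (n + 1))]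
    calc ‖α * q ^ (n + 1) / (1 + α * q ^ (n + 2))‖ * ‖a n‖
        ≤ (1 / 2) * ‖a n‖ := by
          exact mul_le_mul_of_nonneg_right this (norm_nonneg _)
      _ = 1 / 2 * ‖a n‖ := rfl
  -- b tends to 0
  have hb0 : Filter.Tendsto b Filter.atTop (nhds 0) := by
    have h1 : Filter.Tendsto (fun n : ℕ => (1 : ℂ) + α * q ^ (n + 1)) Filter.atTop
        (nhds 1) := by
      have := htend.const_add (1 : ℂ)
      simpa using this
    have := (hsum.tendsto_atTop_zero).mul h1
    simp only [zero_mul] at this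
    exact this.congr fun n => (hba n).symm
  -- partial sums
  have hpartial : ∀ n : ℕ, ∑ i ∈ Finset.range n, a i = b 0 - b n := by
    intro n
    have := Finset.sum_range_sub' b n
    rw [← this]
    exact Finset.sum_congr rfl fun i _ => hkey i
  have hb0eq : b 0 = 1 := by
    simp [hb, qPoch]
  have htendsum : Filter.Tendsto (fun n => ∑ i ∈ Finset.range n, a i) Filter.atTop
      (nhds 1) := by
    have : Filter.Tendsto (fun n => (1 : ℂ) - b n) Filter.atTop (nhds (1 - 0)) :=
      tendsto_const_nhds.sub hb0
    rw [sub_zero] at this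
    exact this.congr fun n => by rw [hpartial n, hb0eq]
  exact tendsto_nhds_unique hsum.hasSum.tendsto_sum_nat htendsum
end

section
/- Let q, z be complex numbers with |q| < 1 such that no factor 1 + z q^{2m+1} (m ≥ 0) vanishes. Then ν(z, −z; −q) = Σ_{n=0}^∞ (q^{n+1}; q)_∞ · q^n / (−z q^{2n+1}; q²)_∞. -/
open scoped BigOperators

open Filter Complex

noncomputable def Lg (c r : ℂ) (j : ℕ) : ℂ := Complex.log (1 + c * r ^ j)

lemma summable_norm_Lg (c : ℂ) {r : ℂ} (hr : ‖r‖ < 1) :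
    Summable fun j => ‖Lg c r j‖ := by
  have hgeo : Summable fun j : ℕ => 3 / 2 * (‖c‖ * ‖r‖ ^ j) :=
    (((summable_geometric_of_lt_one (norm_nonneg r) hr).mul_left ‖c‖).mul_left _)
  apply Summable.of_norm_bounded_eventually_nat hgeo
  have htend : Tendsto (fun j : ℕ => ‖c‖ * ‖r‖ ^ j) atTop (nhds 0) := by
    simpa using (tendsto_pow_atTop_nhds_zero_of_lt_one (norm_nonneg r) hr).const_mul ‖c‖
  filter_upwards [htend.eventually_le_const (by norm_num : (0:ℝ) < 1/2)] with j hj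
  rw [norm_norm]
  have h1 : ‖c * r ^ j‖ ≤ 1 / 2 := by rwa [norm_mul, norm_pow]
  calc ‖Lg c r j‖ ≤ 3 / 2 * ‖c * r ^ j‖ := Complex.norm_log_one_add_half_le_self h1
    _ = 3 / 2 * (‖c‖ * ‖r‖ ^ j) := by rw [norm_mul, norm_pow]

lemma summable_Lg (c : ℂ) {r : ℂ} (hr : ‖r‖ < 1) : Summable (Lg c r) :=
  (summable_norm_Lg c hr).of_norm

lemma tprod_eq_exp_tsum_Lg {c r : ℂ} (hr : ‖r‖ < 1) (hc : ∀ j, 1 + c * r ^ j ≠ 0) :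
    ∏' j : ℕ, (1 + c * r ^ j) = Complex.exp (∑' j, Lg c r j) := by
  have hs := (summable_Lg c hr).hasSum
  have h2 : (cexp ∘ Lg c r) = fun j => 1 + c * r ^ j := funext fun j => Complex.exp_log (hc j)
  have := hs.cexp
  rw [h2] at this
  exact this.tprod_eq

section Main
variable (q w : ℂ)

noncomputable def Gf (j : ℕ) : ℂ := Lg (-q) q j
noncomputable def Ff (j : ℕ) : ℂ := Lg (w * q) (q ^ 2) j
noncomputable def sG (n : ℕ) : ℂ := ∑' m, Gf q (m + n)
noncomputable def sF (n : ℕ) : ℂ := ∑' m, Ff q w (m + n)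
noncomputable def aF (n : ℕ) : ℂ := Complex.exp (sG q n - sF q w n)

variable {q w}

lemma hq2 (hq : ‖q‖ < 1) : ‖q ^ 2‖ < 1 := by
  rw [norm_pow]
  calc ‖q‖ ^ 2 ≤ ‖q‖ := pow_le_of_le_one (norm_nonneg q) hq.le two_ne_zero
  _ < 1 := hq

lemma one_sub_q_pow_ne (hq : ‖q‖ < 1) (k : ℕ) : (1 : ℂ) - q ^ (k + 1) ≠ 0 := by
  intro hcon
  have h1 : (1 : ℂ) = q ^ (k + 1) := by linear_combination hcon
  have : ‖q ^ (k + 1)‖ < 1 := by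
    rw [norm_pow]
    exact pow_lt_one₀ (norm_nonneg q) hq (Nat.succ_ne_zero k)
  rw [← h1] at this; simp at this

-- representation of C n
lemma qPochInf_C_eq (hq : ‖q‖ < 1) (n : ℕ) :
    qPochInf (q ^ (n + 1)) q = Complex.exp (sG q n) := by
  have h0 : qPochInf (q ^ (n + 1)) q = ∏' m : ℕ, (1 + (-q ^ (n + 1)) * q ^ m) := by
    unfold qPochInf; exact tprod_congr fun m => by ring
  rw [h0, tprod_eq_exp_tsum_Lg hq (fun m => ?_), sG]
  · congr 1
    refine tsum_congr fun m => ?_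
    unfold Gf Lg
    congr 1
    ring
  · have := one_sub_q_pow_ne hq (n + m)
    intro hcon
    apply this
    rw [← hcon]
    ring

lemma F_ne (hw : ∀ m : ℕ, 1 + w * q ^ (2 * m + 1) ≠ 0) (n m : ℕ) :
    1 + w * q ^ (2 * n + 1) * (q ^ 2) ^ m ≠ 0 := by
  intro hcon
  apply hw (n + m)
  rw [← hcon]
  ring

lemma qPochInf_D_eq (hq : ‖q‖ < 1) (hw : ∀ m : ℕ, 1 + w * q ^ (2 * m + 1) ≠ 0) (n : ℕ) :
    qPochInf (-w * q ^ (2 * n + 1)) (q ^ 2) = Complex.exp (sF q w n) := by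
  have h0 : qPochInf (-w * q ^ (2 * n + 1)) (q ^ 2)
      = ∏' m : ℕ, (1 + w * q ^ (2 * n + 1) * (q ^ 2) ^ m) := by
    unfold qPochInf; exact tprod_congr fun m => by ring
  rw [h0, tprod_eq_exp_tsum_Lg (hq2 hq) (F_ne hw n), sF]
  congr 1
  refine tsum_congr fun m => ?_
  unfold Ff Lg
  congr 1
  ring

lemma term_eq (hq : ‖q‖ < 1) (hw : ∀ m : ℕ, 1 + w * q ^ (2 * m + 1) ≠ 0) (n : ℕ) :
    qPochInf (q ^ (n + 1)) q * q ^ n / qPochInf (-w * q ^ (2 * n + 1)) (q ^ 2)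
      = q ^ n * aF q w n := by
  rw [qPochInf_C_eq hq, qPochInf_D_eq hq hw, aF, Complex.exp_sub]
  ring

end Main

section Main2
variable {q w : ℂ}

lemma sG_peel (hq : ‖q‖ < 1) (n : ℕ) : sG q n = Gf q n + sG q (n + 1) := by
  have hsum : Summable fun m => Gf q (m + n) :=
    (summable_nat_add_iff n).2 (summable_Lg (-q) hq)
  rw [sG, hsum.tsum_eq_zero_add]
  congr 1
  · simp
  · rw [sG]
    exact tsum_congr fun m => by rw [show m + 1 + n = m + (n + 1) by omega]

lemma sF_peel (hq : ‖q‖ < 1) (hw : ∀ m : ℕ, 1 + w * q ^ (2 * m + 1) ≠ 0) (n : ℕ) :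
    sF q w n = Ff q w n + sF q w (n + 1) := by
  have hsum : Summable fun m => Ff q w (m + n) :=
    (summable_nat_add_iff n).2 (summable_Lg (w * q) (hq2 hq))
  rw [sF, hsum.tsum_eq_zero_add]
  congr 1
  · simp
  · rw [sF]
    exact tsum_congr fun m => by rw [show m + 1 + n = m + (n + 1) by omega]

lemma exp_Gf (hq : ‖q‖ < 1) (n : ℕ) : Complex.exp (Gf q n) = 1 - q ^ (n + 1) := by
  rw [Gf, Lg, Complex.exp_log]
  · ring
  · intro hcon
    apply one_sub_q_pow_ne hq n
    rw [← hcon]; ring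

lemma exp_Ff (hw : ∀ m : ℕ, 1 + w * q ^ (2 * m + 1) ≠ 0) (n : ℕ) :
    Complex.exp (Ff q w n) = 1 + w * q ^ (2 * n + 1) := by
  rw [Ff, Lg, Complex.exp_log]
  · ring
  · intro hcon
    apply hw n
    rw [← hcon]; ring

lemma one_add_w_ne (hw : ∀ m : ℕ, 1 + w * q ^ (2 * m + 1) ≠ 0) (n : ℕ) :
    (1 : ℂ) + w * q * (q ^ 2) ^ n ≠ 0 := by
  intro hcon; apply hw n; rw [← hcon]; ring

lemma aF_rec (hq : ‖q‖ < 1) (hw : ∀ m : ℕ, 1 + w * q ^ (2 * m + 1) ≠ 0) (n : ℕ) :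
    (1 - q ^ (n + 1)) * aF q w (n + 1) = (1 + w * q ^ (2 * n + 1)) * aF q w n := by
  rw [← exp_Gf hq, ← exp_Ff hw, aF, aF, ← Complex.exp_add, ← Complex.exp_add]
  congr 1
  rw [sG_peel hq n, sF_peel hq hw n]
  ring

end Main2

section Main3
variable (q w : ℂ)

noncomputable def TG : ℝ := ∑' j, ‖Gf q j‖
noncomputable def TF : ℝ := ∑' j, ‖Ff q w j‖
noncomputable def Kc : ℝ := Real.exp (TG q + TF q w)

variable {q w}

lemma tail_norm_le {f : ℕ → ℂ} (hf : Summable fun j => ‖f j‖) (n : ℕ) :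
    ‖∑' m, f (m + n)‖ ≤ ∑' j, ‖f j‖ := by
  have h1 : Summable fun m => ‖f (m + n)‖ := (summable_nat_add_iff n).2 hf
  calc ‖∑' m, f (m + n)‖ ≤ ∑' m, ‖f (m + n)‖ := norm_tsum_le_tsum_norm h1
    _ ≤ ∑' j, ‖f j‖ := by
        rw [← Summable.sum_add_tsum_nat_add n hf]
        have : (0:ℝ) ≤ ∑ i ∈ Finset.range n, ‖f i‖ :=
          Finset.sum_nonneg fun i _ => norm_nonneg _
        linarith

lemma norm_sG_le (hq : ‖q‖ < 1) (n : ℕ) : ‖sG q n‖ ≤ TG q :=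
  tail_norm_le (summable_norm_Lg (-q) hq) n

lemma norm_sF_le (hq : ‖q‖ < 1) (n : ℕ) : ‖sF q w n‖ ≤ TF q w :=
  tail_norm_le (summable_norm_Lg (w * q) (hq2 hq)) n

lemma TG_nonneg : 0 ≤ TG q := tsum_nonneg fun j => norm_nonneg _
lemma TF_nonneg : 0 ≤ TF q w := tsum_nonneg fun j => norm_nonneg _

lemma norm_aF_le (hq : ‖q‖ < 1) (n : ℕ) : ‖aF q w n‖ ≤ Kc q w := by
  rw [aF, Complex.norm_exp, Kc]
  apply Real.exp_le_exp.2
  calc (sG q n - sF q w n).re ≤ ‖sG q n - sF q w n‖ := Complex.re_le_norm _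
    _ ≤ ‖sG q n‖ + ‖sF q w n‖ := norm_sub_le _ _
    _ ≤ TG q + TF q w := add_le_add (norm_sG_le hq n) (norm_sF_le hq n)

lemma Kc_pos : 0 < Kc q w := Real.exp_pos _

lemma aF_tendsto (hq : ‖q‖ < 1) : Tendsto (aF q w) atTop (nhds 1) := by
  have hG : Tendsto (sG q) atTop (nhds 0) := tendsto_sum_nat_add (Gf q)
  have hF : Tendsto (sF q w) atTop (nhds 0) := tendsto_sum_nat_add (Ff q w)
  have h2 : Tendsto (fun n => sG q n - sF q w n) atTop (nhds 0) := by
    have h0 : ((0:ℂ) - 0) = 0 := by ring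
    exact h0 ▸ hG.sub hF
  have h3 := (Complex.continuous_exp.tendsto 0).comp h2
  rw [Complex.exp_zero] at h3
  exact h3

lemma summable_qa (hq : ‖q‖ < 1) (p : ℕ → ℂ) (B : ℝ) (hp : ∀ n, ‖p n‖ ≤ B) :
    Summable fun n => q ^ n * aF q w n * p n := by
  have hgeo : Summable fun n : ℕ => (Kc q w * B) * ‖q‖ ^ n :=
    (summable_geometric_of_lt_one (norm_nonneg q) hq).mul_left _
  refine Summable.of_norm (hgeo.of_nonneg_of_le (fun n => norm_nonneg _) (fun n => ?_))
  have hB : (0:ℝ) ≤ B := le_trans (norm_nonneg (p 0)) (hp 0)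
  rw [norm_mul, norm_mul, norm_pow]
  have h1 : ‖q‖ ^ n * ‖aF q w n‖ ≤ ‖q‖ ^ n * Kc q w :=
    mul_le_mul_of_nonneg_left (norm_aF_le hq n) (pow_nonneg (norm_nonneg q) n)
  have h2 : ‖q‖ ^ n * ‖aF q w n‖ * ‖p n‖ ≤ ‖q‖ ^ n * Kc q w * B :=
    mul_le_mul h1 (hp n) (norm_nonneg _) (mul_nonneg (pow_nonneg (norm_nonneg q) n) Kc_pos.le)
  linarith [h2]

end Main3

section Main4
variable (q w : ℂ)

noncomputable def Sf : ℂ := ∑' n : ℕ,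
  qPochInf (q ^ (n + 1)) q * q ^ n / qPochInf (-w * q ^ (2 * n + 1)) (q ^ 2)

noncomputable def gfun (n : ℕ) : ℂ := -((1 - q ^ n) * (1 - w * q ^ (n + 1)) * aF q w n)

variable {q w}

lemma Sf_eq (hq : ‖q‖ < 1) (hw : ∀ m : ℕ, 1 + w * q ^ (2 * m + 1) ≠ 0) :
    Sf q w = ∑' n, q ^ n * aF q w n :=
  tsum_congr fun n => term_eq hq hw n

lemma hw_shift (hw : ∀ m : ℕ, 1 + w * q ^ (2 * m + 1) ≠ 0) :
    ∀ m : ℕ, 1 + w * q ^ 2 * q ^ (2 * m + 1) ≠ 0 := by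
  intro m hcon
  apply hw (m + 1)
  rw [← hcon]; ring

lemma sF_shift (hq : ‖q‖ < 1) (n : ℕ) : sF q (w * q ^ 2) n = sF q w (n + 1) := by
  rw [sF, sF]
  refine tsum_congr fun m => ?_
  have h1 : Ff q (w * q ^ 2) (m + n) = Ff q w (m + n + 1) := by
    rw [Ff, Ff, Lg, Lg]
    congr 1
    ring
  rw [h1, show m + n + 1 = m + (n + 1) by omega]

lemma aF_shift (hq : ‖q‖ < 1) (hw : ∀ m : ℕ, 1 + w * q ^ (2 * m + 1) ≠ 0) (n : ℕ) :
    aF q (w * q ^ 2) n = aF q w n * (1 + w * q ^ (2 * n + 1)) := by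
  rw [aF, aF, sF_shift hq, ← exp_Ff hw, ← Complex.exp_add]
  congr 1
  have := sF_peel hq hw n
  linear_combination this

lemma u_eq_gfun (hq : ‖q‖ < 1) (hw : ∀ m : ℕ, 1 + w * q ^ (2 * m + 1) ≠ 0) (n : ℕ) :
    q ^ n * aF q w n * (1 + w * q - w * q ^ 2 - w ^ 2 * q ^ (2 * n + 3))
      = gfun q w n - gfun q w (n + 1) := by
  have hrec := aF_rec hq hw n
  rw [gfun, gfun]
  linear_combination (-(1 - w * q ^ (n + 2))) * hrec

lemma gfun_tendsto (hq : ‖q‖ < 1) : Tendsto (gfun q w) atTop (nhds (-1)) := by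
  have hpow : Tendsto (fun n : ℕ => q ^ n) atTop (nhds 0) :=
    tendsto_pow_atTop_nhds_zero_of_norm_lt_one hq
  have hc1 : Tendsto (fun _ : ℕ => (1:ℂ)) atTop (nhds 1) := tendsto_const_nhds
  have h1 : Tendsto (fun n : ℕ => 1 - q ^ n) atTop (nhds 1) := by
    have := hc1.sub hpow
    simpa using this
  have h2 : Tendsto (fun n : ℕ => 1 - w * q ^ (n + 1)) atTop (nhds 1) := by
    have hp1 : Tendsto (fun n : ℕ => w * q ^ (n + 1)) atTop (nhds 0) := by
      have : Tendsto (fun n : ℕ => w * q * q ^ n) atTop (nhds (w * q * 0)) :=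
        hpow.const_mul (w * q)
      simpa [pow_succ, mul_comm, mul_assoc, mul_left_comm] using this
    have := hc1.sub hp1
    simpa using this
  have h3 := (h1.mul h2).mul (aF_tendsto (w := w) hq)
  have h4 := h3.neg
  have hval : -((1:ℂ) * 1 * 1) = -1 := by norm_num
  rw [hval] at h4
  exact h4

lemma summable_u (hq : ‖q‖ < 1) :
    Summable fun n => q ^ n * aF q w n * (1 + w * q - w * q ^ 2 - w ^ 2 * q ^ (2 * n + 3)) := by
  apply summable_qa hq _ (1 + ‖w‖ + ‖w‖ + ‖w‖ ^ 2)
  intro n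
  have hq1 : ∀ k : ℕ, ‖q ^ k‖ ≤ 1 := fun k => by
    rw [norm_pow]; exact pow_le_one₀ (norm_nonneg q) hq.le
  calc ‖1 + w * q - w * q ^ 2 - w ^ 2 * q ^ (2 * n + 3)‖
      ≤ ‖1 + w * q - w * q ^ 2‖ + ‖w ^ 2 * q ^ (2 * n + 3)‖ := norm_sub_le _ _
    _ ≤ (‖1 + w * q‖ + ‖w * q ^ 2‖) + ‖w ^ 2 * q ^ (2 * n + 3)‖ := by
        have := norm_sub_le (1 + w * q) (w * q ^ 2); linarith
    _ ≤ ((‖(1:ℂ)‖ + ‖w * q‖) + ‖w * q ^ 2‖) + ‖w ^ 2 * q ^ (2 * n + 3)‖ := by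
        have := norm_add_le (1:ℂ) (w * q); linarith
    _ ≤ 1 + ‖w‖ + ‖w‖ + ‖w‖ ^ 2 := by
        simp only [norm_one, norm_mul, norm_pow]
        have a1 : ‖w‖ * ‖q‖ ≤ ‖w‖ := mul_le_of_le_one_right (norm_nonneg w) hq.le
        have a2 : ‖w‖ * ‖q‖ ^ 2 ≤ ‖w‖ :=
          mul_le_of_le_one_right (norm_nonneg w) (pow_le_one₀ (norm_nonneg q) hq.le)
        have a3 : ‖w‖ ^ 2 * ‖q‖ ^ (2 * n + 3) ≤ ‖w‖ ^ 2 :=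
          mul_le_of_le_one_right (sq_nonneg _) (pow_le_one₀ (norm_nonneg q) hq.le)
        linarith

lemma tsum_u_eq_one (hq : ‖q‖ < 1) (hw : ∀ m : ℕ, 1 + w * q ^ (2 * m + 1) ≠ 0) :
    (∑' n, q ^ n * aF q w n * (1 + w * q - w * q ^ 2 - w ^ 2 * q ^ (2 * n + 3))) = 1 := by
  have hsum := summable_u (w := w) hq
  have hps := hsum.hasSum.tendsto_sum_nat
  have hpartial : ∀ n, (∑ i ∈ Finset.range n,
      q ^ i * aF q w i * (1 + w * q - w * q ^ 2 - w ^ 2 * q ^ (2 * i + 3)))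
      = gfun q w 0 - gfun q w n := by
    intro n
    rw [← Finset.sum_range_sub' (gfun q w) n]
    exact Finset.sum_congr rfl fun i _ => u_eq_gfun hq hw i
  have hg0 : gfun q w 0 = 0 := by rw [gfun]; norm_num
  have htend2 : Tendsto (fun n => gfun q w 0 - gfun q w n) atTop (nhds 1) := by
    rw [hg0]
    have := (gfun_tendsto (w := w) hq).neg
    simpa using this
  have := hps.congr hpartial
  exact tendsto_nhds_unique this htend2

lemma FE (hq : ‖q‖ < 1) (hw : ∀ m : ℕ, 1 + w * q ^ (2 * m + 1) ≠ 0) :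
    (1 + w * q) * Sf q w = 1 + w * q ^ 2 * Sf q (w * q ^ 2) := by
  have hs1 : Summable fun n => q ^ n * aF q w n * (1 + w * q) :=
    summable_qa hq _ ‖1 + w * q‖ (fun n => le_refl _)
  have hs2 : Summable fun n => q ^ n * aF q w n * (w * q ^ 2 * (1 + w * q ^ (2 * n + 1))) := by
    apply summable_qa hq _ (‖w * q ^ 2‖ * (1 + ‖w‖))
    intro n
    rw [norm_mul]
    apply mul_le_mul_of_nonneg_left _ (norm_nonneg _)
    calc ‖1 + w * q ^ (2 * n + 1)‖ ≤ ‖(1:ℂ)‖ + ‖w * q ^ (2 * n + 1)‖ := norm_add_le _ _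
      _ ≤ 1 + ‖w‖ := by
          rw [norm_one, norm_mul, norm_pow]
          have : ‖w‖ * ‖q‖ ^ (2 * n + 1) ≤ ‖w‖ * 1 :=
            mul_le_mul_of_nonneg_left (pow_le_one₀ (norm_nonneg q) hq.le) (norm_nonneg w)
          linarith
  have e1 : (1 + w * q) * Sf q w = ∑' n, q ^ n * aF q w n * (1 + w * q) := by
    rw [Sf_eq hq hw, ← tsum_mul_left]
    exact tsum_congr fun n => by ring
  have e2 : w * q ^ 2 * Sf q (w * q ^ 2)
      = ∑' n, q ^ n * aF q w n * (w * q ^ 2 * (1 + w * q ^ (2 * n + 1))) := by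
    rw [Sf_eq hq (hw_shift hw), ← tsum_mul_left]
    refine tsum_congr fun n => ?_
    rw [aF_shift hq hw n]
    ring
  have hdiff : (1 + w * q) * Sf q w - w * q ^ 2 * Sf q (w * q ^ 2) = 1 := by
    rw [e1, e2, ← hs1.tsum_sub hs2]
    calc (∑' n, (q ^ n * aF q w n * (1 + w * q)
            - q ^ n * aF q w n * (w * q ^ 2 * (1 + w * q ^ (2 * n + 1)))))
        = ∑' n, q ^ n * aF q w n * (1 + w * q - w * q ^ 2 - w ^ 2 * q ^ (2 * n + 3)) :=
          tsum_congr fun n => by ring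
      _ = 1 := tsum_u_eq_one (w := w) hq hw
  linear_combination hdiff

end Main4

section Main5
variable (q z : ℂ)

noncomputable def Pd (n : ℕ) : ℂ := ∏ m ∈ Finset.range n, (1 + z * q ^ (2 * m + 1))
noncomputable def Rt (n : ℕ) : ℂ := z ^ n * q ^ (n ^ 2 + n) / Pd q z n
noncomputable def bt (n : ℕ) : ℂ := z ^ n * q ^ (n ^ 2 + n) / Pd q z (n + 1)

variable {q z}

lemma Pd_ne (h : ∀ m : ℕ, 1 + z * q ^ (2 * m + 1) ≠ 0) (n : ℕ) : Pd q z n ≠ 0 :=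
  Finset.prod_ne_zero_iff.2 fun m _ => h m

lemma hw_n (h : ∀ m : ℕ, 1 + z * q ^ (2 * m + 1) ≠ 0) (n : ℕ) :
    ∀ m : ℕ, 1 + z * q ^ (2 * n) * q ^ (2 * m + 1) ≠ 0 := by
  intro m hcon
  apply h (n + m)
  rw [← hcon]; ring

lemma Pd_succ (n : ℕ) : Pd q z (n + 1) = Pd q z n * (1 + z * q ^ (2 * n + 1)) :=
  Finset.prod_range_succ _ n

lemma Sf_iter (hq : ‖q‖ < 1) (h : ∀ m : ℕ, 1 + z * q ^ (2 * m + 1) ≠ 0) (n : ℕ) :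
    Sf q z = (∑ k ∈ Finset.range n, bt q z k) + Rt q z n * Sf q (z * q ^ (2 * n)) := by
  induction n with
  | zero => simp [Rt, Pd]
  | succ n ih =>
    have hfe := FE (w := z * q ^ (2 * n)) hq (hw_n h n)
    have hc : (1 : ℂ) + z * q ^ (2 * n + 1) ≠ 0 := h n
    have hP : Pd q z n ≠ 0 := Pd_ne h n
    have harg : z * q ^ (2 * n) * q ^ 2 = z * q ^ (2 * (n + 1)) := by ring
    rw [harg] at hfe
    have hS : Sf q (z * q ^ (2 * n))
        = (1 + z * q ^ (2 * n) * q ^ 2 * Sf q (z * q ^ (2 * (n + 1)))) / (1 + z * q ^ (2 * n + 1)) := by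
      rw [eq_div_iff hc]
      linear_combination hfe
    have hstep : Rt q z n * Sf q (z * q ^ (2 * n))
        = bt q z n + Rt q z (n + 1) * Sf q (z * q ^ (2 * (n + 1))) := by
      rw [hS, Rt, bt, Rt, Pd_succ]
      field_simp
      ring
    rw [ih, hstep, Finset.sum_range_succ]
    ring

lemma norm_Sf_le (hq : ‖q‖ < 1) (hw : ∀ m : ℕ, 1 + w * q ^ (2 * m + 1) ≠ 0) :
    ‖Sf q w‖ ≤ Kc q w * (1 - ‖q‖)⁻¹ := by
  rw [Sf_eq hq hw]
  have hgeo : Summable fun n : ℕ => Kc q w * ‖q‖ ^ n :=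
    (summable_geometric_of_lt_one (norm_nonneg q) hq).mul_left _
  have hb : ∀ n : ℕ, ‖q ^ n * aF q w n‖ ≤ Kc q w * ‖q‖ ^ n := by
    intro n
    rw [norm_mul, norm_pow]
    calc ‖q‖ ^ n * ‖aF q w n‖ ≤ ‖q‖ ^ n * Kc q w :=
          mul_le_mul_of_nonneg_left (norm_aF_le hq n) (pow_nonneg (norm_nonneg q) n)
      _ = Kc q w * ‖q‖ ^ n := by ring
  have hsn : Summable fun n : ℕ => ‖q ^ n * aF q w n‖ :=
    hgeo.of_nonneg_of_le (fun n => norm_nonneg _) hb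
  calc ‖∑' n, q ^ n * aF q w n‖ ≤ ∑' n, ‖q ^ n * aF q w n‖ := norm_tsum_le_tsum_norm hsn
    _ ≤ ∑' n : ℕ, Kc q w * ‖q‖ ^ n := Summable.tsum_le_tsum hb hsn hgeo
    _ = Kc q w * (1 - ‖q‖)⁻¹ := by
        rw [tsum_mul_left, tsum_geometric_of_lt_one (norm_nonneg q) hq]

lemma TF_tail_le (hq : ‖q‖ < 1) (n : ℕ) : TF q (z * q ^ (2 * n)) ≤ TF q z := by
  have he : ∀ j : ℕ, Ff q (z * q ^ (2 * n)) j = Ff q z (j + n) := by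
    intro j
    rw [Ff, Ff, Lg, Lg]
    congr 1
    ring
  have h1 : TF q (z * q ^ (2 * n)) = ∑' j, ‖Ff q z (j + n)‖ := by
    rw [TF]
    exact tsum_congr fun j => by rw [he j]
  have hs : Summable fun j => ‖Ff q z j‖ := summable_norm_Lg (z * q) (hq2 hq)
  rw [h1, TF, ← Summable.sum_add_tsum_nat_add n hs]
  have : (0:ℝ) ≤ ∑ i ∈ Finset.range n, ‖Ff q z i‖ :=
    Finset.sum_nonneg fun i _ => norm_nonneg _
  -- note : Ff q z = Lg (z*q) (q^2)
  exact le_add_of_nonneg_left this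

lemma Kc_tail_le (hq : ‖q‖ < 1) (n : ℕ) : Kc q (z * q ^ (2 * n)) ≤ Kc q z :=
  Real.exp_le_exp.2 (add_le_add_right (TF_tail_le hq n) _)

lemma Rt_succ (h : ∀ m : ℕ, 1 + z * q ^ (2 * m + 1) ≠ 0) (n : ℕ) :
    Rt q z (n + 1) = Rt q z n * (z * q ^ (2 * n + 2) / (1 + z * q ^ (2 * n + 1))) := by
  have hc : (1 : ℂ) + z * q ^ (2 * n + 1) ≠ 0 := h n
  have hP : Pd q z n ≠ 0 := Pd_ne h n
  rw [Rt, Rt, Pd_succ]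
  field_simp
  ring

lemma ev_small (hq : ‖q‖ < 1) : ∀ᶠ n : ℕ in atTop,
    ‖z * q ^ (2 * n + 2)‖ ≤ 1 / 4 ∧ 1 / 2 ≤ ‖1 + z * q ^ (2 * n + 1)‖ := by
  have hp2 : Tendsto (fun n : ℕ => (q ^ 2) ^ n) atTop (nhds 0) :=
    tendsto_pow_atTop_nhds_zero_of_norm_lt_one (hq2 hq)
  have h1 : Tendsto (fun n : ℕ => z * q ^ (2 * n + 2)) atTop (nhds 0) := by
    have := hp2.const_mul (z * q ^ 2)
    rw [mul_zero] at this
    refine this.congr fun n => ?_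
    ring
  have h2 : Tendsto (fun n : ℕ => z * q ^ (2 * n + 1)) atTop (nhds 0) := by
    have := hp2.const_mul (z * q)
    rw [mul_zero] at this
    refine this.congr fun n => ?_
    ring
  have h1n : Tendsto (fun n : ℕ => ‖z * q ^ (2 * n + 2)‖) atTop (nhds 0) := by
    simpa using h1.norm
  have h2n : Tendsto (fun n : ℕ => ‖1 + z * q ^ (2 * n + 1)‖) atTop (nhds 1) := by
    have h3 : Tendsto (fun n : ℕ => 1 + z * q ^ (2 * n + 1)) atTop (nhds 1) := by
      have hc1 : Tendsto (fun _ : ℕ => (1:ℂ)) atTop (nhds 1) := tendsto_const_nhds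
      have := hc1.add h2
      simpa using this
    simpa using h3.norm
  filter_upwards [h1n.eventually_le_const (by norm_num : (0:ℝ) < 1/4),
    h2n.eventually_const_le (by norm_num : (1:ℝ)/2 < 1)] with n hn1 hn2
  exact ⟨hn1, hn2⟩

lemma Rt_summable (hq : ‖q‖ < 1) (h : ∀ m : ℕ, 1 + z * q ^ (2 * m + 1) ≠ 0) :
    Summable (Rt q z) := by
  apply summable_of_ratio_norm_eventually_le (r := 1 / 2) (by norm_num)
  filter_upwards [ev_small (z := z) hq] with n hn
  rw [Rt_succ h n, norm_mul, norm_div]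
  have hpos : (0:ℝ) < ‖1 + z * q ^ (2 * n + 1)‖ := lt_of_lt_of_le (by norm_num) hn.2
  have hdivle : ‖z * q ^ (2 * n + 2)‖ / ‖1 + z * q ^ (2 * n + 1)‖ ≤ 1 / 2 := by
    rw [div_le_iff₀ hpos]
    nlinarith [hn.1, hn.2]
  calc ‖Rt q z n‖ * (‖z * q ^ (2 * n + 2)‖ / ‖1 + z * q ^ (2 * n + 1)‖)
      ≤ ‖Rt q z n‖ * (1 / 2) := mul_le_mul_of_nonneg_left hdivle (norm_nonneg _)
    _ = 1 / 2 * ‖Rt q z n‖ := by ring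

lemma rem_tendsto (hq : ‖q‖ < 1) (h : ∀ m : ℕ, 1 + z * q ^ (2 * m + 1) ≠ 0) :
    Tendsto (fun n => Rt q z n * Sf q (z * q ^ (2 * n))) atTop (nhds 0) := by
  have hRt0 : Tendsto (Rt q z) atTop (nhds 0) := (Rt_summable hq h).tendsto_atTop_zero
  have hRtn : Tendsto (fun n => ‖Rt q z n‖) atTop (nhds 0) := by simpa using hRt0.norm
  have hgt : Tendsto (fun n => ‖Rt q z n‖ * (Kc q z * (1 - ‖q‖)⁻¹)) atTop (nhds 0) := by
    have := hRtn.mul_const (Kc q z * (1 - ‖q‖)⁻¹)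
    rwa [zero_mul] at this
  apply squeeze_zero_norm _ hgt
  intro n
  rw [norm_mul]
  have hb1 : ‖Sf q (z * q ^ (2 * n))‖ ≤ Kc q (z * q ^ (2 * n)) * (1 - ‖q‖)⁻¹ :=
    norm_Sf_le hq (hw_n h n)
  have hb2 : Kc q (z * q ^ (2 * n)) * (1 - ‖q‖)⁻¹ ≤ Kc q z * (1 - ‖q‖)⁻¹ :=
    mul_le_mul_of_nonneg_right (Kc_tail_le hq n) (inv_nonneg.2 (by linarith [norm_nonneg q]))
  exact mul_le_mul_of_nonneg_left (le_trans hb1 hb2) (norm_nonneg _)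

lemma bt_eq (h : ∀ m : ℕ, 1 + z * q ^ (2 * m + 1) ≠ 0) (n : ℕ) :
    bt q z n = Rt q z n * (1 + z * q ^ (2 * n + 1))⁻¹ := by
  have hc : (1 : ℂ) + z * q ^ (2 * n + 1) ≠ 0 := h n
  have hP : Pd q z n ≠ 0 := Pd_ne h n
  rw [bt, Rt, Pd_succ]
  field_simp

lemma bt_summable (hq : ‖q‖ < 1) (h : ∀ m : ℕ, 1 + z * q ^ (2 * m + 1) ≠ 0) :
    Summable (bt q z) := by
  have hRs : Summable fun n => ‖Rt q z n‖ := summable_norm_iff.2 (Rt_summable hq h)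
  apply Summable.of_norm_bounded_eventually_nat (hRs.mul_left 2)
  filter_upwards [ev_small (z := z) hq] with n hn
  rw [bt_eq h n, norm_mul, norm_inv]
  have hpos : (0:ℝ) < ‖1 + z * q ^ (2 * n + 1)‖ := lt_of_lt_of_le (by norm_num) hn.2
  have hinv : ‖1 + z * q ^ (2 * n + 1)‖⁻¹ ≤ 2 := by
    rw [inv_le_comm₀ hpos (by norm_num)]
    linarith [hn.2]
  calc ‖Rt q z n‖ * ‖1 + z * q ^ (2 * n + 1)‖⁻¹ ≤ ‖Rt q z n‖ * 2 :=
        mul_le_mul_of_nonneg_left hinv (norm_nonneg _)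
    _ = 2 * ‖Rt q z n‖ := by ring

end Main5

theorem nu_alpha_eq_neg_z (q z : ℂ) (hq : ‖q‖ < 1)
    (h : ∀ m : ℕ, 1 + z * q ^ (2 * m + 1) ≠ 0) :
    nu z (-z) (-q)
      = ∑' n : ℕ, qPochInf (q ^ (n + 1)) q * q ^ n / qPochInf (-z * q ^ (2 * n + 1)) (q ^ 2) := by
  have hq' : ‖q‖ < 1 := hq
  -- step 1: nu z (-z) (-q) = ∑' n, bt q z n
  have h1 : nu z (-z) (-q) = ∑' n, bt q z n := by
    rw [nu]
    refine tsum_congr fun n => ?_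
    have heven : Even (n ^ 2 + n) := by
      have : n ^ 2 + n = n * (n + 1) := by ring
      rw [this]
      exact Nat.even_mul_succ_self n
    have hpow : (-q) ^ (n ^ 2 + n) = q ^ (n ^ 2 + n) := heven.neg_pow q
    have hpoch : qPoch (- -z * -q) ((-q) ^ 2) (n + 1) = Pd q z (n + 1) := by
      rw [qPoch, Pd]
      refine Finset.prod_congr rfl fun m _ => ?_
      ring
    rw [hpow, hpoch, bt]
  -- step 2: ∑' n, bt q z n = Sf q z
  have hbt := bt_summable hq' h
  have hps : Tendsto (fun n => ∑ k ∈ Finset.range n, bt q z k) atTop (nhds (Sf q z)) := by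
    have hrem := rem_tendsto hq' h
    have : Tendsto (fun n => Sf q z - Rt q z n * Sf q (z * q ^ (2 * n))) atTop (nhds (Sf q z)) := by
      have hc : Tendsto (fun _ : ℕ => Sf q z) atTop (nhds (Sf q z)) := tendsto_const_nhds
      have := hc.sub hrem
      simpa using this
    refine this.congr fun n => ?_
    have := Sf_iter hq' h n
    linear_combination this
  have h2 : (∑' n, bt q z n) = Sf q z :=
    tendsto_nhds_unique hbt.hasSum.tendsto_sum_nat hps
  rw [h1, h2, Sf]
end

section
/- Let q be a complex number with |q| < 1 such that q^m ≠ −1 for all m ≥ 1. Then Σ_{n=1}^∞ q^n / (−q^n; q)_∞ = 1 − (q; q²)_∞. -/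
open scoped BigOperators

open Filter Topology Complex

private lemma one_add_ne_zero' {z : ℂ} (hz : ‖z‖ < 1) : 1 + z ≠ 0 := by
  intro hzz
  have hz1 : z = -1 := by linear_combination hzz
  rw [hz1] at hz
  simp at hz

private lemma abs_term_lt {c q : ℂ} (hq : ‖q‖ < 1) (hc : ‖c‖ < 1) (m : ℕ) :
    ‖c * q ^ m‖ < 1 := by
  rw [norm_mul, norm_pow]
  calc ‖c‖ * ‖q‖ ^ m ≤ ‖c‖ * 1 := by
        refine mul_le_mul_of_nonneg_left ?_ (norm_nonneg c)
        exact pow_le_one₀ (norm_nonneg q) hq.le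
    _ < 1 := by simpa using hc

private lemma summable_log_aux (c q : ℂ) (hq : ‖q‖ < 1) :
    Summable fun m : ℕ => Complex.log (1 + c * q ^ m) := by
  have hg : Summable fun m : ℕ => 3 / 2 * (‖c‖ * ‖q‖ ^ m) :=
    ((summable_geometric_of_lt_one (norm_nonneg q) hq).mul_left _).mul_left _
  refine Summable.of_norm_bounded_eventually_nat hg ?_
  have h0 : Tendsto (fun m : ℕ => ‖c‖ * ‖q‖ ^ m) atTop (𝓝 0) := by
    simpa using
      (tendsto_pow_atTop_nhds_zero_of_lt_one (norm_nonneg q) hq).const_mul (‖c‖)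
  filter_upwards [h0.eventually_le_const (by norm_num : (0 : ℝ) < 1 / 2)] with m hm
  have hb : ‖c * q ^ m‖ ≤ 1 / 2 := by
    simpa [norm_mul, norm_pow] using hm
  calc ‖Complex.log (1 + c * q ^ m)‖ ≤ 3 / 2 * ‖c * q ^ m‖ :=
        Complex.norm_log_one_add_half_le_self hb
    _ ≤ _ := by
        rw [norm_mul, norm_pow]

private lemma hasProd_aux (c q : ℂ) (hq : ‖q‖ < 1) (hc : ‖c‖ < 1) :
    HasProd (fun m : ℕ => 1 + c * q ^ m)
      (Complex.exp (∑' m : ℕ, Complex.log (1 + c * q ^ m))) := by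
  have hs := (summable_log_aux c q hq).hasSum.cexp
  have he : (Complex.exp ∘ fun m : ℕ => Complex.log (1 + c * q ^ m)) =
      fun m : ℕ => 1 + c * q ^ m :=
    funext fun m => Complex.exp_log (one_add_ne_zero' (abs_term_lt hq hc m))
  rwa [he] at hs

private lemma multipliable_aux (c q : ℂ) (hq : ‖q‖ < 1) (hc : ‖c‖ < 1) :
    Multipliable fun m : ℕ => 1 + c * q ^ m :=
  (hasProd_aux c q hq hc).multipliable

private lemma tprod_aux_ne_zero (c q : ℂ) (hq : ‖q‖ < 1) (hc : ‖c‖ < 1) :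
    (∏' m : ℕ, (1 + c * q ^ m)) ≠ 0 := by
  rw [(hasProd_aux c q hq hc).tprod_eq]
  exact Complex.exp_ne_zero _

theorem euler_type_identity (q : ℂ) (hq : ‖q‖ < 1)
    (h : ∀ m : ℕ, q ^ (m + 1) ≠ -1) :
    (∑' n : ℕ, q ^ (n + 1) / qPochInf (-q ^ (n + 1)) q) = 1 - qPochInf q (q ^ 2) := by
  have hq2 : ‖q ^ 2‖ < 1 := by
    rw [norm_pow]
    calc ‖q‖ ^ 2 ≤ ‖q‖ * 1 := by
          rw [sq]; exact mul_le_mul_of_nonneg_left hq.le (norm_nonneg q)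
      _ < 1 := by simpa using hq
  have hnq : ‖-q‖ < 1 := by rwa [norm_neg]
  have hnq2 : ‖-q ^ 2‖ < 1 := by rwa [norm_neg]
  -- the four products
  set u : ℕ → ℂ := fun m => 1 + q * q ^ m with hu
  set v : ℕ → ℂ := fun m => 1 + -q * q ^ m with hv
  set T : ℂ := ∏' m : ℕ, u m with hT
  set A : ℂ := ∏' m : ℕ, v m with hA
  set B : ℂ := ∏' m : ℕ, (1 + -q ^ 2 * (q ^ 2) ^ m) with hB
  set C : ℂ := ∏' m : ℕ, (1 + -q * (q ^ 2) ^ m) with hC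
  have hTmul : Multipliable u := multipliable_aux q q hq hq
  have hAmul : Multipliable v := multipliable_aux (-q) q hq hnq
  have hBmul : Multipliable fun m : ℕ => 1 + -q ^ 2 * (q ^ 2) ^ m :=
    multipliable_aux (-q ^ 2) (q ^ 2) hq2 hnq2
  have hCmul : Multipliable fun m : ℕ => 1 + -q * (q ^ 2) ^ m :=
    multipliable_aux (-q) (q ^ 2) hq2 hnq
  have hTne : T ≠ 0 := tprod_aux_ne_zero q q hq hq
  have hBne : B ≠ 0 := tprod_aux_ne_zero (-q ^ 2) (q ^ 2) hq2 hnq2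
  -- Euler: C * T = 1
  have hsplit : C * B = A := by
    rw [hA, hC, hB]
    have he : (fun k : ℕ => v (2 * k)) = fun k : ℕ => 1 + -q * (q ^ 2) ^ k := by
      funext k
      simp only [hv]
      congr 1
      rw [← pow_mul]
    have ho : (fun k : ℕ => v (2 * k + 1)) = fun k : ℕ => 1 + -q ^ 2 * (q ^ 2) ^ k := by
      funext k
      simp only [hv]
      have : q * q ^ (2 * k + 1) = q ^ 2 * (q ^ 2) ^ k := by
        rw [← pow_succ', ← pow_mul, ← pow_add]
        congr 1
        omega
      linear_combination -this
    rw [← he, ← ho]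
    exact tprod_even_mul_odd (he ▸ hCmul) (ho ▸ hBmul)
  have hterm : (fun m : ℕ => 1 + -q ^ 2 * (q ^ 2) ^ m) = fun m : ℕ => v m * u m := by
    funext m
    rw [hu, hv]
    have : (q ^ 2) ^ m = q ^ m * q ^ m := by rw [← pow_mul, two_mul, pow_add]
    rw [this]
    ring
  have hBAT : B = A * T := by
    rw [hB, hterm, Multipliable.tprod_mul hAmul hTmul, ← hA, ← hT]
  have hCT : C * T = 1 := by
    have : B * 1 = B * (C * T) := by
      rw [mul_one]
      calc B = A * T := hBAT
        _ = (C * B) * T := by rw [hsplit]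
        _ = B * (C * T) := by ring
    exact (mul_left_cancel₀ hBne this).symm
  have hCeq : C = T⁻¹ := by
    field_simp at hCT ⊢
    linear_combination hCT
  -- partial products
  set f : ℕ → ℂ := fun n => ∏ i ∈ Finset.range n, u i with hf
  have hfne : ∀ n, f n ≠ 0 := by
    intro n
    refine Finset.prod_ne_zero_iff.2 fun i _ => ?_
    exact one_add_ne_zero' (abs_term_lt hq hq i)
  have hftend : Tendsto f atTop (𝓝 T) := hTmul.hasProd.tendsto_prod_nat
  -- rewriting each term of the series
  have hterm2 : ∀ n : ℕ, q ^ (n + 1) / qPochInf (-q ^ (n + 1)) q = q ^ (n + 1) * f n / T := by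
    intro n
    have h1 : qPochInf (-q ^ (n + 1)) q = ∏' m : ℕ, u (m + n) := by
      rw [qPochInf]
      refine tprod_congr fun m => ?_
      simp only [hu]
      have : q * q ^ (m + n) = q ^ (n + 1) * q ^ m := by
        rw [← pow_succ', ← pow_add]
        congr 1
        omega
      rw [this]
      ring
    have hshift : Multipliable fun m : ℕ => u (m + n) := by
      have := multipliable_aux (q ^ (n + 1)) q hq (by
        rw [norm_pow]
        calc ‖q‖ ^ (n + 1) ≤ ‖q‖ ^ 1 :=
              pow_le_pow_of_le_one (norm_nonneg q) hq.le (by omega)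
          _ < 1 := by simpa using hq)
      refine this.congr fun m => ?_
      simp only [hu]
      have hppow : q * q ^ (m + n) = q ^ (n + 1) * q ^ m := by
        rw [← pow_succ', ← pow_add]
        congr 1
        omega
      rw [hppow]
    have h2 : f n * ∏' m : ℕ, u (m + n) = T := Multipliable.prod_mul_tprod_nat_mul' hshift
    have h3 : qPochInf (-q ^ (n + 1)) q = T / f n := by
      rw [h1, eq_div_iff (hfne n), mul_comm, h2]
    rw [h3, div_div_eq_mul_div]
  -- summability via geometric bound
  obtain ⟨M, hM⟩ : ∃ M : ℝ, ∀ n, ‖f n‖ ≤ M := by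
    obtain ⟨M, hM⟩ := hftend.norm.bddAbove_range
    exact ⟨M, fun n => hM (Set.mem_range_self n)⟩
  have hgsum : Summable fun n : ℕ => q ^ (n + 1) * f n := by
    have hgeo : Summable fun n : ℕ => M * ‖q‖ * ‖q‖ ^ n :=
      ((summable_geometric_of_lt_one (norm_nonneg q) hq).mul_left _)
    refine Summable.of_norm_bounded hgeo fun n => ?_
    rw [norm_mul, norm_pow]
    have h1 : ‖q‖ ^ (n + 1) = ‖q‖ * ‖q‖ ^ n := by
      rw [pow_succ]; ring
    rw [h1]
    calc ‖q‖ * ‖q‖ ^ n * ‖f n‖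
        ≤ ‖q‖ * ‖q‖ ^ n * M := by
          refine mul_le_mul_of_nonneg_left (hM n) (by positivity)
      _ = M * ‖q‖ * ‖q‖ ^ n := by ring
  -- telescoping sum
  have htel : HasSum (fun n : ℕ => q ^ (n + 1) * f n) (T - 1) := by
    rw [Summable.hasSum_iff_tendsto_nat hgsum]
    have heq : (fun N : ℕ => ∑ i ∈ Finset.range N, q ^ (i + 1) * f i) = fun N => f N - 1 := by
      funext N
      have : ∀ i ∈ Finset.range N, q ^ (i + 1) * f i = f (i + 1) - f i := by
        intro i _
        simp only [hf]
        rw [Finset.prod_range_succ]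
        have : u i = 1 + q ^ (i + 1) := by simp only [hu]; rw [pow_succ']
        rw [this]
        ring
      rw [Finset.sum_congr rfl this, Finset.sum_range_sub]
      simp [hf]
    rw [heq]
    simpa using hftend.sub tendsto_const_nhds
  -- conclude
  have hLHS : (∑' n : ℕ, q ^ (n + 1) / qPochInf (-q ^ (n + 1)) q) = (T - 1) / T := by
    rw [tsum_congr hterm2]
    rw [tsum_div_const, htel.tsum_eq]
  have hRHS : qPochInf q (q ^ 2) = C := by
    rw [qPochInf, hC]
    exact tprod_congr fun m => by ring
  rw [hLHS, hRHS, hCeq]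
  field_simp
end
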